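/- A function that can be written with nonnegative coefficients in a GKS basis has nonnegative integral with respect to μ; moreover, the product of two such functions is again of this form. -/
import Mathlib


/-- A function written with nonnegative coefficients in a GKS basis
(a "GKS function") has nonnegative integral with respect to `μ`, and the product of two
GKS functions is again a GKS function. A function `g` is GKS iff `∫ g f_i dμ ≥ 0` for
all `i`. -/
theorem stmt2 {E : Type*} [Fintype E] [Nonempty E] (n : ℕ)
    (μ : E → ℝ) (f : Fin (n + 1) → E → ℝ)
    (hcard : Fintype.card E = n + 1)
    (hμpos : ∀ x, 0 < μ x) (hμsum : ∑ x, μ x = 1)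
    (hf0 : ∀ x, f 0 x = 1)
    (horth : ∀ i j, ∑ x, μ x * f i x * f j x = if i = j then (1 : ℝ) else 0)
    (hGKS : ∀ i j k, 0 ≤ ∑ x, μ x * f i x * f j x * f k x) :
    (∀ g : E → ℝ, (∀ i, 0 ≤ ∑ x, μ x * g x * f i x) → 0 ≤ ∑ x, μ x * g x) ∧
    (∀ g h : E → ℝ, (∀ i, 0 ≤ ∑ x, μ x * g x * f i x) →
      (∀ i, 0 ≤ ∑ x, μ x * h x * f i x) →
      ∀ i, 0 ≤ ∑ x, μ x * (g x * h x) * f i x) := by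
  classical
  have hE : Fintype.card (Fin (n + 1)) = Fintype.card E := by simp [hcard]
  let e : Fin (n + 1) ≃ E := Fintype.equivOfCardEq hE
  set A : Matrix (Fin (n + 1)) (Fin (n + 1)) ℝ :=
    Matrix.of fun i j => Real.sqrt (μ (e j)) * f i (e j) with hA
  have hAAT : A * A.transpose = 1 := by
    ext i j
    simp only [Matrix.mul_apply, Matrix.transpose_apply, hA, Matrix.of_apply,
      Matrix.one_apply]
    have hterm : ∀ k, Real.sqrt (μ (e k)) * f i (e k) * (Real.sqrt (μ (e k)) * f j (e k))
        = μ (e k) * f i (e k) * f j (e k) := by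
      intro k
      have h2 : Real.sqrt (μ (e k)) * Real.sqrt (μ (e k)) = μ (e k) :=
        Real.mul_self_sqrt (hμpos (e k)).le
      linear_combination (f i (e k) * f j (e k)) * h2
    rw [Finset.sum_congr rfl fun k _ => hterm k]
    have hsum := Fintype.sum_equiv e (fun k => μ (e k) * f i (e k) * f j (e k))
      (fun x => μ x * f i x * f j x) (fun k => rfl)
    rw [hsum, horth i j]
  have hATA : A.transpose * A = 1 := mul_eq_one_comm.mp hAAT
  have hkey : ∀ x y : E, μ y * ∑ i, f i x * f i y = if x = y then 1 else 0 := by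
    intro x y
    have h1 := congrFun (congrFun hATA (e.symm x)) (e.symm y)
    simp only [Matrix.mul_apply, Matrix.transpose_apply, hA, Matrix.of_apply,
      Matrix.one_apply, Equiv.apply_symm_apply, EmbeddingLike.apply_eq_iff_eq] at h1
    have h2 : ∑ i, Real.sqrt (μ x) * f i x * (Real.sqrt (μ y) * f i y)
        = (Real.sqrt (μ x) * Real.sqrt (μ y)) * ∑ i, f i x * f i y := by
      rw [Finset.mul_sum]; exact Finset.sum_congr rfl fun i _ => by ring
    rw [h2] at h1
    by_cases hxy : x = y
    · subst hxy
      simp only [if_pos] at h1 ⊢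
      rwa [Real.mul_self_sqrt (hμpos x).le] at h1
    · simp only [if_neg hxy] at h1 ⊢
      have hx : Real.sqrt (μ x) ≠ 0 := ne_of_gt (Real.sqrt_pos.mpr (hμpos x))
      have hy : Real.sqrt (μ y) ≠ 0 := ne_of_gt (Real.sqrt_pos.mpr (hμpos y))
      have hs : ∑ i, f i x * f i y = 0 := by
        rcases mul_eq_zero.mp h1 with h | h
        · exact absurd h (mul_ne_zero hx hy)
        · exact h
      rw [hs, mul_zero]
  have hcomp : ∀ (g : E → ℝ) (x : E), g x = ∑ i, (∑ y, μ y * g y * f i y) * f i x := by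
    intro g x
    calc g x = ∑ y, (if x = y then (1 : ℝ) else 0) * g y := by
          simp [ite_mul]
      _ = ∑ y, (μ y * ∑ i, f i x * f i y) * g y :=
          Finset.sum_congr rfl fun y _ => by rw [hkey x y]
      _ = ∑ y, ∑ i, μ y * g y * f i y * f i x := by
          refine Finset.sum_congr rfl fun y _ => ?_
          rw [Finset.mul_sum, Finset.sum_mul]
          exact Finset.sum_congr rfl fun i _ => by ring
      _ = ∑ i, (∑ y, μ y * g y * f i y) * f i x := by
          rw [Finset.sum_comm]
          exact Finset.sum_congr rfl fun i _ => by rw [Finset.sum_mul]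
  constructor
  · intro g hg
    have := hg 0
    simpa [hf0] using this
  · intro g h hg hh k
    have hmain : ∑ x, μ x * (g x * h x) * f k x
        = ∑ i, ∑ j, (∑ y, μ y * g y * f i y) * (∑ y, μ y * h y * f j y)
            * ∑ x, μ x * f i x * f j x * f k x := by
      calc ∑ x, μ x * (g x * h x) * f k x
          = ∑ x, ∑ i, ∑ j, (∑ y, μ y * g y * f i y) * (∑ y, μ y * h y * f j y)
              * (μ x * f i x * f j x * f k x) := by
            refine Finset.sum_congr rfl fun x _ => ?_
            conv_lhs => rw [hcomp g x, hcomp h x]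
            rw [Finset.sum_mul_sum, Finset.mul_sum, Finset.sum_mul]
            refine Finset.sum_congr rfl fun i _ => ?_
            rw [Finset.mul_sum, Finset.sum_mul]
            exact Finset.sum_congr rfl fun j _ => by ring
        _ = ∑ i, ∑ x, ∑ j, (∑ y, μ y * g y * f i y) * (∑ y, μ y * h y * f j y)
              * (μ x * f i x * f j x * f k x) := Finset.sum_comm
        _ = ∑ i, ∑ j, ∑ x, (∑ y, μ y * g y * f i y) * (∑ y, μ y * h y * f j y)
              * (μ x * f i x * f j x * f k x) :=
            Finset.sum_congr rfl fun i _ => Finset.sum_comm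
        _ = ∑ i, ∑ j, (∑ y, μ y * g y * f i y) * (∑ y, μ y * h y * f j y)
              * ∑ x, μ x * f i x * f j x * f k x := by
            refine Finset.sum_congr rfl fun i _ => Finset.sum_congr rfl fun j _ => ?_
            exact (Finset.mul_sum _ _ _).symm
    rw [hmain]
    refine Finset.sum_nonneg fun i _ => Finset.sum_nonneg fun j _ =>
      mul_nonneg (mul_nonneg (hg i) (hh j)) (hGKS i j k)
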